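/- arXiv:1006.1746 — 6 statements merged into one kernel-verified Lean document; each statement's English description precedes it below -/
import Mathlib

section
/- Every square matrix A with nonnegative entries indexed by a finite set I admits an invariant probability: a probability vector λ ∈ Δ(I) such that for every i ∈ I, Σ_{j ∈ I} λ(j) a_{ji} = λ(i) Σ_{j ∈ I} a_{ij}. -/
/-- Every nonnegative square matrix over a finite (nonempty) index set admits an invariant
probability `λ`: `λ ≥ 0`, `∑ λ = 1`, and `∑_j λ j * a j i = λ i * ∑_j a i j` for every `i`. -/
theorem exists_invariant_probability {I : Type*} [Fintype I] [Nonempty I]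
    (a : I → I → ℝ) (ha : ∀ i j, 0 ≤ a i j) :
    ∃ lam : I → ℝ, (∀ i, 0 ≤ lam i) ∧ (∑ i, lam i = 1) ∧
      ∀ i, ∑ j, lam j * a j i = lam i * ∑ j, a i j := by
  classical
  by_cases hz : ∃ j, ∑ k, a j k = 0
  · -- a zero row: put all mass there
    obtain ⟨j, hj⟩ := hz
    have hjz : ∀ k, a j k = 0 := fun k =>
      (Finset.sum_eq_zero_iff_of_nonneg (fun k _ => ha j k)).mp hj k (Finset.mem_univ k)
    refine ⟨fun i => if i = j then 1 else 0, ?_, ?_, ?_⟩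
    · intro i; dsimp only; split <;> norm_num
    · simp
    · intro i
      have hL : ∑ k, (if k = j then (1:ℝ) else 0) * a k i = a j i := by
        rw [Finset.sum_eq_single j]
        · simp
        · intro b _ hb; simp [hb]
        · simp
      rw [hL, hjz i]
      by_cases hij : i = j
      · subst hij; simp [hj]
      · simp [hij]
  · -- all row sums positive
    push_neg at hz
    set s : I → ℝ := fun j => ∑ k, a j k with hs
    have hspos : ∀ j, 0 < s j := fun j =>
      lt_of_le_of_ne (Finset.sum_nonneg fun k _ => ha j k) (Ne.symm (hz j))
    set Q : Matrix I I ℝ := Matrix.of fun i j => a j i / s j with hQ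
    have hQnn : ∀ i j, 0 ≤ Q i j := fun i j => div_nonneg (ha j i) (hspos j).le
    have hcol : ∀ j, ∑ i, Q i j = 1 := by
      intro j
      simp only [hQ, Matrix.of_apply]
      rw [← Finset.sum_div, hs]
      exact div_self (hspos j).ne'
    -- det (Q - 1) = 0 since transpose kills ones vector
    have hdet : (Q - 1).det = 0 := by
      rw [← Matrix.det_transpose]
      rw [← Matrix.exists_mulVec_eq_zero_iff]
      refine ⟨fun _ => 1, ?_, ?_⟩
      · intro h
        have := congrFun h (Classical.arbitrary I)
        norm_num at this
      · funext j
        simp only [Matrix.mulVec, dotProduct, Matrix.transpose_apply,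
          Matrix.sub_apply, mul_one, Pi.zero_apply]
        rw [Finset.sum_sub_distrib, hcol j]
        simp [Matrix.one_apply]
    obtain ⟨v, hv0, hvQ⟩ := Matrix.exists_mulVec_eq_zero_iff.mpr hdet
    have hvfix : ∀ i, ∑ j, Q i j * v j = v i := by
      intro i
      have := congrFun hvQ i
      simp only [Matrix.mulVec, dotProduct, Matrix.sub_apply, Pi.zero_apply,
        sub_mul, Finset.sum_sub_distrib] at this
      have hone : ∑ j, (1 : Matrix I I ℝ) i j * v j = v i := by
        simp [Matrix.one_apply]
      linarith [this, hone]
    set w : I → ℝ := fun i => |v i| with hw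
    have hwnn : ∀ i, 0 ≤ w i := fun i => abs_nonneg _
    have hle : ∀ i, w i ≤ ∑ j, Q i j * w j := by
      intro i
      calc w i = |∑ j, Q i j * v j| := by rw [hvfix i]
        _ ≤ ∑ j, |Q i j * v j| := Finset.abs_sum_le_sum_abs _ _
        _ = ∑ j, Q i j * w j := by
            refine Finset.sum_congr rfl fun j _ => ?_
            rw [abs_mul, abs_of_nonneg (hQnn i j)]
    have hsumeq : ∑ i, (∑ j, Q i j * w j) = ∑ i, w i := by
      rw [Finset.sum_comm]
      refine Finset.sum_congr rfl fun j _ => ?_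
      rw [← Finset.sum_mul, hcol j, one_mul]
    have hwfix : ∀ i, ∑ j, Q i j * w j = w i := by
      intro i
      have h0 : ∑ i, ((∑ j, Q i j * w j) - w i) = 0 := by
        rw [Finset.sum_sub_distrib, hsumeq, sub_self]
      have := (Finset.sum_eq_zero_iff_of_nonneg
        (fun i _ => sub_nonneg.mpr (hle i))).mp h0 i (Finset.mem_univ i)
      linarith
    -- normalize w j / s j
    set T : ℝ := ∑ j, w j / s j with hT
    have hTpos : 0 < T := by
      obtain ⟨i, hi⟩ : ∃ i, v i ≠ 0 := by
        by_contra h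
        push_neg at h
        exact hv0 (funext h)
      refine Finset.sum_pos' (fun j _ => div_nonneg (hwnn j) (hspos j).le)
        ⟨i, Finset.mem_univ i, ?_⟩
      exact div_pos (abs_pos.mpr hi) (hspos i)
    refine ⟨fun i => (w i / s i) / T, ?_, ?_, ?_⟩
    · intro i
      exact div_nonneg (div_nonneg (hwnn i) (hspos i).le) hTpos.le
    · rw [← Finset.sum_div, ← hT, div_self hTpos.ne']
    · intro i
      have key : ∑ j, (w j / s j) * a j i = w i := by
        calc ∑ j, (w j / s j) * a j i = ∑ j, Q i j * w j := by
              refine Finset.sum_congr rfl fun j _ => ?_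
              simp only [hQ, Matrix.of_apply]
              field_simp
          _ = w i := hwfix i
      calc ∑ j, ((w j / s j) / T) * a j i = (∑ j, (w j / s j) * a j i) / T := by
            rw [Finset.sum_div]
            exact Finset.sum_congr rfl fun j _ => by ring
        _ = w i / T := by rw [key]
        _ = ((w i / s i) / T) * (∑ j, a i j) := by
            have : (∑ j, a i j) = s i := rfl
            rw [this, div_div, div_mul_eq_mul_div,
              div_eq_div_iff hTpos.ne' (mul_ne_zero (hspos i).ne' hTpos.ne')]
            ring
end

section
/- Let λ be an invariant probability of the nonnegative matrix A⁺ (the componentwise positive part of a matrix A ∈ R^{I×I}), and let A⁻ = A − A⁺ be the componentwise negative part. Then for every U ∈ R^I, ⟨E_λ[R(·,U)] − A⁻, A − A⁻⟩ = 0, where E_λ[R(·,U)] is the matrix whose (i,j)-entry is λ(i)(U_j − U_i). -/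
/-- If `λ` is an invariant probability of `A⁺` (componentwise positive part of `A`), then for every
`U`, `⟪E_λ[R(·,U)] - A⁻, A - A⁻⟫ = 0`, where `E_λ[R(·,U)]` has `(i,j)` entry `λ i * (U j - U i)`
and `A⁻` is the componentwise negative part of `A`. -/
theorem invariant_prob_bset_identity {I : Type*} [Fintype I]
    (A : I → I → ℝ)
    (lam : I → ℝ) (hlam0 : ∀ i, 0 ≤ lam i) (hlam1 : ∑ i, lam i = 1)
    (hinv : ∀ i, ∑ j, lam j * max (A j i) 0 = lam i * ∑ j, max (A i j) 0)
    (U : I → ℝ) :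
    ∑ i, ∑ j, (lam i * (U j - U i) - min (A i j) 0) * (A i j - min (A i j) 0) = 0 := by
  have key : ∀ i j, (lam i * (U j - U i) - min (A i j) 0) * (A i j - min (A i j) 0)
      = lam i * (U j - U i) * max (A i j) 0 := by
    intro i j
    have h1 : A i j - min (A i j) 0 = max (A i j) 0 := by
      rcases le_or_gt (A i j) 0 with h | h
      · simp [min_eq_left h, max_eq_right h]
      · simp [min_eq_right h.le, max_eq_left h.le]
    have h2 : min (A i j) 0 * max (A i j) 0 = 0 := by
      rcases le_or_gt (A i j) 0 with h | h
      · simp [max_eq_right h]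
      · simp [min_eq_right h.le]
    rw [h1]; linear_combination -h2
  simp only [key]
  have expand : ∀ i j, lam i * (U j - U i) * max (A i j) 0
      = U j * (lam i * max (A i j) 0) - U i * (lam i * max (A i j) 0) := by
    intro i j; ring
  simp only [expand, Finset.sum_sub_distrib]
  have h1 : ∑ i, ∑ j, U j * (lam i * max (A i j) 0)
      = ∑ i, U i * (lam i * ∑ j, max (A i j) 0) := by
    rw [Finset.sum_comm]
    refine Finset.sum_congr rfl fun j _ => ?_
    rw [← Finset.mul_sum, hinv j]
  have h2 : ∑ i, ∑ j, U i * (lam i * max (A i j) 0)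
      = ∑ i, U i * (lam i * ∑ j, max (A i j) 0) := by
    refine Finset.sum_congr rfl fun i _ => ?_
    rw [← Finset.mul_sum, ← Finset.mul_sum]
  rw [h1, h2, sub_self]
end

section
/- Let ρ : Δ(I) × Δ(J) → R^d be a bilinear (affine in each variable) payoff map over finite sets I, J, and let C ⊆ R^d be a closed convex set. Suppose that for every y ∈ Δ(J) there exists x ∈ Δ(I) with ρ(x,y) ∈ C. Then C is a B-set for Player 1: for every z ∈ R^d there exist p ∈ Π_C(z) and x ∈ Δ(I) such that ⟨ρ(x,y) − p, z − p⟩ ≤ 0 for all y ∈ Δ(J). -/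
open Pointwise in
/-- Matrix-game minimax step. -/
lemma matrix_game_aux {I J : Type*} [Fintype I] [Fintype J] [Nonempty I] [Nonempty J]
    (c : I → J → ℝ)
    (h : ∀ y ∈ stdSimplex ℝ J, ∃ x ∈ stdSimplex ℝ I, ∑ i, ∑ j, x i * y j * c i j ≤ 0) :
    ∃ x ∈ stdSimplex ℝ I, ∀ j, ∑ i, x i * c i j ≤ 0 := by
  classical
  by_contra hcon
  push_neg at hcon
  set L : (I → ℝ) →ₗ[ℝ] EuclideanSpace ℝ J :=
    { toFun := fun x => WithLp.toLp 2 (fun j => ∑ i, x i * c i j)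
      map_add' := by
        intro a b; ext j
        simp [add_mul, Finset.sum_add_distrib]
      map_smul' := by
        intro r a; ext j
        simp [Finset.mul_sum, mul_assoc] } with hL
  set A : Set (EuclideanSpace ℝ J) := L '' (stdSimplex ℝ I) with hA
  set Q : Set (EuclideanSpace ℝ J) := {q | ∀ j, 0 ≤ q j} with hQ
  have hAconv : Convex ℝ A := (convex_stdSimplex ℝ I).linear_image L
  have hAcomp : IsCompact A := (isCompact_stdSimplex ℝ I).image L.continuous_of_finiteDimensional
  have hQconv : Convex ℝ Q := by
    intro a ha b hb s t hs ht _
    intro j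
    exact add_nonneg (mul_nonneg hs (ha j)) (mul_nonneg ht (hb j))
  have hQclosed : IsClosed Q := by
    have hQeq : Q = ⋂ j, {q : EuclideanSpace ℝ J | 0 ≤ q j} := by
      ext q; simp [hQ, Set.mem_iInter]
    rw [hQeq]
    exact isClosed_iInter fun j =>
      isClosed_le continuous_const (EuclideanSpace.proj (𝕜 := ℝ) j).continuous
  have hDconv : Convex ℝ (A + Q) := hAconv.add hQconv
  have hDclosed : IsClosed (A + Q) := hQclosed.add_left_of_isCompact hAcomp
  have h0D : (0 : EuclideanSpace ℝ J) ∉ A + Q := by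
    intro hmem
    obtain ⟨a, ha, q, hq, haq⟩ := Set.mem_add.mp hmem
    obtain ⟨x, hx, hLx⟩ := ha
    obtain ⟨j, hj⟩ := hcon x hx
    have h1 : a j + q j = 0 := by
      have := congrArg (fun v : EuclideanSpace ℝ J => v j) haq; simpa using this
    have haj : a j = ∑ i, x i * c i j := by rw [← hLx]; rfl
    have h2 := hq j
    linarith
  obtain ⟨f, u, hfu, hfD⟩ := geometric_hahn_banach_point_closed hDconv hDclosed h0D
  have hu : 0 < u := by simpa using hfu
  set w : J → ℝ := fun j => f (EuclideanSpace.single j 1) with hw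
  have hfval : ∀ v : EuclideanSpace ℝ J, f v = ∑ j, v j * w j := by
    intro v
    have hv : v = ∑ j, v j • EuclideanSpace.single j (1 : ℝ) := by
      ext j
      simp [WithLp.ofLp_sum, EuclideanSpace.single_apply, Pi.single_apply]
    calc f v = f (∑ j, v j • EuclideanSpace.single j (1 : ℝ)) := by conv_lhs => rw [hv]
      _ = ∑ j, v j * w j := by rw [map_sum]; simp [hw, smul_eq_mul]
  obtain ⟨i0⟩ := ‹Nonempty I›
  set x0 : I → ℝ := fun i => if i0 = i then 1 else 0 with hx0
  have hx0mem : x0 ∈ stdSimplex ℝ I := ite_eq_mem_stdSimplex ℝ i0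
  have haD : ∀ q ∈ Q, L x0 + q ∈ A + Q := fun q hq =>
    Set.add_mem_add ⟨x0, hx0mem, rfl⟩ hq
  have hbase : u < f (L x0) := by
    have := hfD _ (haD 0 (fun j => le_refl 0))
    simpa using this
  have hwpos : ∀ j, 0 ≤ w j := by
    intro j
    by_contra hneg
    push_neg at hneg
    set t : ℝ := (f (L x0) - u) / (-w j) + 1 with ht
    have htpos : 0 < t := by
      have h1 : 0 < -w j := by linarith
      have h2 : 0 < f (L x0) - u := by linarith
      positivity
    have hmem : L x0 + t • EuclideanSpace.single j (1:ℝ) ∈ A + Q := by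
      apply haD
      intro j'
      by_cases hjj : j' = j <;>
        simp [EuclideanSpace.single_apply, hjj, le_of_lt htpos]
    have hlt := hfD _ hmem
    rw [map_add, map_smul] at hlt
    have hfs : f (EuclideanSpace.single j (1:ℝ)) = w j := rfl
    rw [hfs, smul_eq_mul] at hlt
    have hdiv : t * w j = -(f (L x0) - u) + w j := by
      have hne : w j ≠ 0 := ne_of_lt hneg
      rw [ht, add_mul, one_mul, div_neg, neg_mul, div_mul_cancel₀ _ hne]
    linarith
  have hsum : 0 < ∑ j, w j := by
    rcases eq_or_lt_of_le (Finset.sum_nonneg fun j _ => hwpos j) with heq | hlt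
    · exfalso
      have hz : ∀ j ∈ Finset.univ, w j = 0 :=
        (Finset.sum_eq_zero_iff_of_nonneg fun j _ => hwpos j).mp heq.symm
      have := hfval (L x0)
      simp only [fun j => hz j (Finset.mem_univ j), mul_zero, Finset.sum_const_zero] at this
      linarith
    · exact hlt
  set y : J → ℝ := fun j => w j / (∑ j', w j') with hy
  have hymem : y ∈ stdSimplex ℝ J := by
    constructor
    · intro j; exact div_nonneg (hwpos j) hsum.le
    · rw [hy]; rw [← Finset.sum_div]; field_simp
  obtain ⟨x, hx, hxy⟩ := h y hymem
  have hmem : L x ∈ A + Q := by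
    have : L x + 0 ∈ A + Q := Set.add_mem_add ⟨x, hx, rfl⟩ (fun j => le_refl 0)
    simpa using this
  have hpos := hfD _ hmem
  rw [hfval] at hpos
  have hLxj : ∀ j, (L x) j = ∑ i, x i * c i j := fun j => rfl
  have hSy : ∀ j, (∑ j', w j') * y j = w j := fun j => by
    rw [hy]; field_simp
  have key : ∑ j, (L x) j * w j = (∑ j', w j') * ∑ i, ∑ j, x i * y j * c i j := by
    calc ∑ j, (L x) j * w j = ∑ j, ∑ i, x i * c i j * w j := by
          refine Finset.sum_congr rfl fun j _ => ?_
          rw [hLxj, Finset.sum_mul]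
      _ = ∑ i, ∑ j, x i * c i j * w j := Finset.sum_comm
      _ = (∑ j', w j') * ∑ i, ∑ j, x i * y j * c i j := by
          rw [Finset.mul_sum]
          refine Finset.sum_congr rfl fun i _ => ?_
          rw [Finset.mul_sum]
          refine Finset.sum_congr rfl fun j _ => ?_
          rw [← hSy j]; ring
  rw [key] at hpos
  nlinarith [mul_nonneg hsum.le (neg_nonneg.2 hxy)]

/-- If for every mixed action `y ∈ Δ(J)` there is `x ∈ Δ(I)` with expected payoff `ρ(x,y) ∈ C`
(`C` closed convex), then `C` is a B-set: for every `z` there are a nearest point `p` of `C` to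
`z` and `x ∈ Δ(I)` such that `⟪ρ(x,y) - p, z - p⟫ ≤ 0` for all `y ∈ Δ(J)`. -/
theorem convex_condition_implies_Bset {I J : Type*} [Fintype I] [Fintype J] [Nonempty J]
    {d : ℕ} (ρ : I → J → EuclideanSpace ℝ (Fin d))
    (C : Set (EuclideanSpace ℝ (Fin d))) (hCclosed : IsClosed C) (hCconv : Convex ℝ C)
    (hcond : ∀ y : J → ℝ, y ∈ stdSimplex ℝ J → ∃ x ∈ stdSimplex ℝ I,
      (∑ i, ∑ j, (x i * y j) • ρ i j) ∈ C) :
    ∀ z : EuclideanSpace ℝ (Fin d), ∃ p ∈ C,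
      (∀ c ∈ C, ‖z - p‖ ≤ ‖z - c‖) ∧
      ∃ x ∈ stdSimplex ℝ I, ∀ y ∈ stdSimplex ℝ J,
        inner ℝ ((∑ i, ∑ j, (x i * y j) • ρ i j) - p) (z - p) ≤ (0 : ℝ) := by
  classical
  intro z
  -- C is nonempty and I is nonempty
  obtain ⟨j0⟩ := ‹Nonempty J›
  obtain ⟨x1, hx1, hx1C⟩ := hcond _ (ite_eq_mem_stdSimplex ℝ j0)
  have hInonempty : Nonempty I := by
    by_contra hI
    have : (∑ i : I, x1 i) = 1 := hx1.2
    rw [Finset.sum_eq_zero (fun i _ => absurd ⟨i⟩ hI)] at this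
    norm_num at this
  have hCne : C.Nonempty := ⟨_, hx1C⟩
  -- nearest point
  obtain ⟨p, hpC, hpdist⟩ := exists_norm_eq_iInf_of_complete_convex hCne
    (hCclosed.isComplete) hCconv z
  have hproj : ∀ w ∈ C, inner ℝ (z - p) (w - p) ≤ (0:ℝ) :=
    (norm_eq_iInf_iff_real_inner_le_zero hCconv hpC).mp hpdist
  have hnear : ∀ c ∈ C, ‖z - p‖ ≤ ‖z - c‖ := by
    intro c hc
    rw [hpdist]
    exact ciInf_le ⟨0, fun r ⟨w, hw⟩ => hw ▸ norm_nonneg _⟩ (⟨c, hc⟩ : C)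
  -- payoff identity
  set g : I → J → ℝ := fun i j => inner ℝ (ρ i j - p) (z - p) with hg
  have hiden : ∀ x ∈ stdSimplex ℝ I, ∀ y ∈ stdSimplex ℝ J,
      ∑ i, ∑ j, x i * y j * g i j
        = inner ℝ ((∑ i, ∑ j, (x i * y j) • ρ i j) - p) (z - p) := by
    intro x hx y hy
    rw [inner_sub_left, sum_inner]
    have h1 : ∀ i, (inner ℝ (∑ j, (x i * y j) • ρ i j) (z - p) : ℝ)
        = ∑ j, x i * y j * inner ℝ (ρ i j) (z - p) := by
      intro i
      rw [sum_inner]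
      exact Finset.sum_congr rfl fun j _ => real_inner_smul_left _ _ _
    simp only [h1]
    have h2 : ∑ i, ∑ j, x i * y j * (g i j)
        = ∑ i, ∑ j, x i * y j * inner ℝ (ρ i j) (z - p)
          - ∑ i, ∑ j, x i * y j * inner ℝ p (z - p) := by
      rw [← Finset.sum_sub_distrib]
      refine Finset.sum_congr rfl fun i _ => ?_
      rw [← Finset.sum_sub_distrib]
      refine Finset.sum_congr rfl fun j _ => ?_
      rw [hg]
      simp only [inner_sub_left]
      ring
    have h3 : ∑ i, ∑ j, x i * y j * (inner ℝ p (z - p) : ℝ) = inner ℝ p (z - p) := by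
      have : ∀ i, ∑ j, x i * y j * (inner ℝ p (z - p) : ℝ)
          = x i * inner ℝ p (z - p) := by
        intro i
        rw [← Finset.sum_mul, ← Finset.mul_sum, hy.2]
        ring
      simp only [this]
      rw [← Finset.sum_mul, hx.2, one_mul]
    rw [h2, h3]
  -- hypothesis of the minimax lemma
  have hmm : ∀ y ∈ stdSimplex ℝ J, ∃ x ∈ stdSimplex ℝ I,
      ∑ i, ∑ j, x i * y j * g i j ≤ 0 := by
    intro y hy
    obtain ⟨x, hx, hxC⟩ := hcond y hy
    refine ⟨x, hx, ?_⟩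
    rw [hiden x hx y hy]
    have := hproj _ hxC
    rwa [real_inner_comm] at this
  obtain ⟨x, hx, hxall⟩ := matrix_game_aux g hmm
  refine ⟨p, hpC, hnear, x, hx, ?_⟩
  intro y hy
  rw [← hiden x hx y hy]
  calc ∑ i, ∑ j, x i * y j * g i j = ∑ j, y j * ∑ i, x i * g i j := by
        rw [Finset.sum_comm]
        refine Finset.sum_congr rfl fun j _ => ?_
        rw [Finset.mul_sum]
        exact Finset.sum_congr rfl fun i _ => by ring
    _ ≤ 0 := Finset.sum_nonpos fun j _ =>
        mul_nonpos_of_nonneg_of_nonpos (hy.1 j) (hxall j)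
end

section
/- Let g : Δ(I) × Δ(J) → R be bilinear (affine in each coordinate) on the product of two finite-dimensional probability simplices, and suppose for every y ∈ Δ(J) there exists x ∈ Δ(I) with g(x,y) ≤ 0. Then there exists x* ∈ Δ(I) such that g(x*, y) ≤ 0 for all y ∈ Δ(J). -/
/-- Minimax consequence: if `g` is bilinear on `Δ(I) × Δ(J)` and for every `y ∈ Δ(J)` there is
`x ∈ Δ(I)` with `g(x,y) ≤ 0`, then some `x* ∈ Δ(I)` satisfies `g(x*,y) ≤ 0` for all `y ∈ Δ(J)`. -/
theorem exists_uniform_good_strategy {I J : Type*} [Fintype I] [Fintype J]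
    [Nonempty I] [Nonempty J] [DecidableEq I] [DecidableEq J]
    (g : (I → ℝ) → (J → ℝ) → ℝ)
    (hbil : ∀ x y, g x y = ∑ i, ∑ j, x i * y j * g (Pi.single i 1) (Pi.single j 1))
    (hcond : ∀ y ∈ stdSimplex ℝ J, ∃ x ∈ stdSimplex ℝ I, g x y ≤ 0) :
    ∃ x ∈ stdSimplex ℝ I, ∀ y ∈ stdSimplex ℝ J, g x y ≤ 0 := by
  classical
  set A : I → J → ℝ := fun i j => g (Pi.single i 1) (Pi.single j 1) with hA
  -- the linear map x ↦ (∑ i, x i * A i j)_j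
  set T : (I → ℝ) →ₗ[ℝ] (J → ℝ) :=
    { toFun := fun x j => ∑ i, x i * A i j
      map_add' := by
        intro x y; funext j; simp [add_mul, Finset.sum_add_distrib]
      map_smul' := by
        intro c x; funext j
        simp [Finset.mul_sum, mul_assoc] } with hT
  have hg : ∀ x y, g x y = ∑ j, y j * T x j := by
    intro x y
    rw [hbil]
    rw [Finset.sum_comm]
    simp only [hT, LinearMap.coe_mk, AddHom.coe_mk, Finset.mul_sum]
    congr 1; funext j; congr 1; funext i; ring
  by_contra h
  push_neg at h
  set C : Set (J → ℝ) := T '' stdSimplex ℝ I with hC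
  set K : Set (J → ℝ) := {z | ∀ j, z j ≤ 0} with hK
  have hCconv : Convex ℝ C := (convex_stdSimplex ℝ I).linear_image T
  have hCcomp : IsCompact C :=
    (isCompact_stdSimplex ℝ I).image T.continuous_of_finiteDimensional
  have hKconv : Convex ℝ K := by
    intro z hz w hw a b ha hb hab j
    simp only [Pi.add_apply, Pi.smul_apply, smul_eq_mul]
    nlinarith [hz j, hw j]
  have hKclosed : IsClosed K := by
    have : K = ⋂ j, {z : J → ℝ | z j ≤ 0} := by
      ext z; simp [hK]
    rw [this]
    exact isClosed_iInter fun j => isClosed_le (continuous_apply j) continuous_const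
  have hdisj : Disjoint C K := by
    rw [Set.disjoint_left]
    rintro c ⟨x, hx, rfl⟩ hcK
    obtain ⟨y, hy, hgy⟩ := h x hx
    have : g x y ≤ 0 := by
      rw [hg]
      apply Finset.sum_nonpos
      intro j _
      exact mul_nonpos_of_nonneg_of_nonpos (hy.1 j) (hcK j)
    linarith
  obtain ⟨f, u, v, hfu, huv, hfv⟩ :=
    geometric_hahn_banach_compact_closed hCconv hCcomp hKconv hKclosed hdisj
  have hv0 : v < 0 := by
    have := hfv 0 (fun j => le_refl 0)
    simpa using this
  -- f is nonpositive on each basis vector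
  have hfe : ∀ j, f (Pi.single j 1) ≤ 0 := by
    intro j
    by_contra hpos
    push_neg at hpos
    have hmem : ((v - 1) / f (Pi.single j 1)) • (Pi.single j 1 : J → ℝ) ∈ K := by
      intro j'
      simp only [Pi.smul_apply, smul_eq_mul]
      rcases eq_or_ne j' j with rfl | hne
      · simp only [Pi.single_eq_same, mul_one]
        exact div_nonpos_of_nonpos_of_nonneg (by linarith) hpos.le
      · simp [Pi.single_eq_of_ne hne]
    have hcon := hfv _ hmem
    rw [map_smul, smul_eq_mul, div_mul_cancel₀ _ (ne_of_gt hpos)] at hcon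
    linarith
  set y : J → ℝ := fun j => -f (Pi.single j 1) with hy
  have hy0 : ∀ j, 0 ≤ y j := fun j => by simpa [hy] using hfe j
  have hfz : ∀ z : J → ℝ, f z = -∑ j, z j * y j := by
    intro z
    have hz : z = ∑ j, z j • (Pi.single j 1 : J → ℝ) := by
      funext j'
      simp [Finset.sum_apply, Pi.single_apply]
    conv_lhs => rw [hz]
    rw [map_sum]
    simp [hy, mul_comm]
  -- on C, ∑ z j * y j > 0
  have hCpos : ∀ c ∈ C, 0 < ∑ j, c j * y j := by
    intro c hc
    have h1 : f c < u := hfu c hc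
    have := hfz c
    linarith
  -- s > 0
  set s : ℝ := ∑ j, y j with hs
  have hs0 : 0 < s := by
    have hx0 := ite_eq_mem_stdSimplex ℝ (Classical.arbitrary I)
    have hpos := hCpos _ ⟨_, hx0, rfl⟩
    by_contra hle
    push_neg at hle
    have hall : ∀ j, y j = 0 := by
      intro j
      have h1 : s = 0 := le_antisymm hle (Finset.sum_nonneg fun j _ => hy0 j)
      have := Finset.sum_eq_zero_iff_of_nonneg (fun j _ => hy0 j) |>.mp h1
      exact this j (Finset.mem_univ j)
    simp [hall] at hpos
  set yb : J → ℝ := fun j => y j / s with hyb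
  have hybmem : yb ∈ stdSimplex ℝ J := by
    constructor
    · intro j; exact div_nonneg (hy0 j) hs0.le
    · simp only [hyb]
      rw [← Finset.sum_div]
      field_simp
      exact hs.symm
  obtain ⟨x, hx, hgle⟩ := hcond yb hybmem
  have hc : T x ∈ C := ⟨x, hx, rfl⟩
  have hpos := hCpos _ hc
  have heq : g x yb = (∑ j, T x j * y j) / s := by
    rw [hg]
    rw [Finset.sum_div]
    congr 1; funext j
    simp only [hyb]
    ring
  rw [heq] at hgle
  have : 0 < (∑ j, T x j * y j) / s := div_pos hpos hs0
  linarith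
end

section
/- Let (X_n) be a sequence of random vectors in R^d adapted to a filtration, with ‖X_n‖ ≤ B almost surely and E[X_{n+1} | F_n] = m_{n+1} (a predictable sequence). Then for every η > 0 and n, P( ‖(1/n) Σ_{m=1}^n (X_m − m_m)‖ ≥ η ) ≤ 2 exp(−n η² / (2 B²) · c_d) for a dimension-dependent constant c_d > 0. -/
open MeasureTheory Filter
open Real


section Aux
variable {Ω : Type} {m0 : MeasurableSpace Ω} {μ : Measure Ω} [IsProbabilityMeasure μ]

/-- Pointwise chord bound: for `|x| ≤ K`, `exp (t*x) ≤ cosh (t*K) + (sinh (t*K)/K) * x`. -/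
lemma exp_le_chord {K t x : ℝ} (hK : 0 < K) (hx : |x| ≤ K) :
    Real.exp (t * x) ≤ Real.cosh (t * K) + Real.sinh (t * K) / K * x := by
  obtain ⟨hx1, hx2⟩ := abs_le.1 hx
  set l : ℝ := (K - x) / (2 * K) with hl
  set r : ℝ := (K + x) / (2 * K) with hr
  have hl0 : 0 ≤ l := div_nonneg (by linarith) (by linarith)
  have hr0 : 0 ≤ r := div_nonneg (by linarith) (by linarith)
  have hlr : l + r = 1 := by
    rw [hl, hr, ← add_div, div_eq_one_iff_eq (ne_of_gt (by linarith))]; ring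
  have hconv := convexOn_exp.2 (Set.mem_univ (-(t * K))) (Set.mem_univ (t * K)) hl0 hr0 hlr
  have harg : l • (-(t * K)) + r • (t * K) = t * x := by
    simp only [smul_eq_mul, hl, hr]; field_simp; ring
  rw [harg] at hconv
  refine hconv.trans_eq ?_
  simp only [smul_eq_mul, Real.cosh_eq, Real.sinh_eq, Real.exp_neg, hl, hr]
  field_simp
  ring

/-- Conditional Hoeffding step. -/
lemma condexp_exp_le {m : MeasurableSpace Ω} (hm : m ≤ m0) {D : Ω → ℝ}
    (hD : AEStronglyMeasurable[m0] D μ) {K : ℝ} (hK : 0 < K) (hbdd : ∀ᵐ ω ∂μ, |D ω| ≤ K)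
    (hcond : μ[D | m] =ᵐ[μ] 0) (t : ℝ) :
    μ[fun ω => Real.exp (t * D ω) | m] ≤ᵐ[μ] fun _ => Real.exp (t ^ 2 * K ^ 2 / 2) := by
  have hDint : Integrable D μ := by
    refine (integrable_const K).mono' hD ?_
    filter_upwards [hbdd] with ω h using by simpa [Real.norm_eq_abs] using h
  have hexpSM : AEStronglyMeasurable[m0] (fun ω => Real.exp (t * D ω)) μ :=
    Real.continuous_exp.comp_aestronglyMeasurable (hD.const_mul t)
  have hexpint : Integrable (fun ω => Real.exp (t * D ω)) μ := by
    refine (integrable_const (Real.exp (|t| * K))).mono' hexpSM ?_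
    filter_upwards [hbdd] with ω h
    rw [Real.norm_eq_abs, Real.abs_exp]
    refine Real.exp_le_exp.2 ?_
    calc t * D ω ≤ |t * D ω| := le_abs_self _
    _ = |t| * |D ω| := abs_mul _ _
    _ ≤ |t| * K := by gcongr
  set a : ℝ := Real.cosh (t * K)
  set b : ℝ := Real.sinh (t * K) / K
  have hpt : (fun ω => Real.exp (t * D ω)) ≤ᵐ[μ] (fun _ => a) + b • D := by
    filter_upwards [hbdd] with ω h
    simpa [a, b] using exp_le_chord hK h
  have hgint : Integrable ((fun _ => a) + b • D) μ := (integrable_const a).add (hDint.smul b)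
  have h1 : μ[fun ω => Real.exp (t * D ω) | m] ≤ᵐ[μ] μ[(fun _ => a) + b • D | m] :=
    condExp_mono hexpint hgint hpt
  have h2 : μ[(fun _ => a) + b • D | m] =ᵐ[μ] fun _ => a := by
    refine (condExp_add (integrable_const a) (hDint.smul b) m).trans ?_
    have hsm : μ[b • D | m] =ᵐ[μ] b • μ[D | m] := condExp_smul b D m
    have hc : μ[(fun _ => a : Ω → ℝ) | m] = fun _ => a := condExp_const hm a
    filter_upwards [hsm, hcond] with ω h1 h2
    simp [hc, h1, h2]
  have ha : a ≤ Real.exp (t ^ 2 * K ^ 2 / 2) := by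
    have := Real.cosh_le_exp_half_sq (t * K)
    simpa [mul_pow] using this
  filter_upwards [h1, h2] with ω hh1 hh2
  calc (μ[fun ω => Real.exp (t * D ω) | m]) ω ≤ _ := hh1
  _ = a := hh2
  _ ≤ _ := ha

end Aux

section Azuma
variable {Ω : Type} {m0 : MeasurableSpace Ω} (μ : Measure Ω) [IsProbabilityMeasure μ]
  (ℱ : Filtration ℕ m0) (D : ℕ → Ω → ℝ) {K : ℝ}

lemma sum_sm (hmeas : ∀ m : ℕ, 1 ≤ m → StronglyMeasurable[ℱ m] (D m)) (n : ℕ) :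
    StronglyMeasurable[ℱ n] (fun ω => ∑ m ∈ Finset.Icc 1 n, D m ω) := by
  refine Finset.stronglyMeasurable_fun_sum _ fun m hm => ?_
  rw [Finset.mem_Icc] at hm
  exact (hmeas m hm.1).mono (ℱ.mono hm.2)

lemma sum_bdd (hK : 0 ≤ K) (hbdd : ∀ m : ℕ, 1 ≤ m → ∀ᵐ ω ∂μ, |D m ω| ≤ K) (n : ℕ) :
    ∀ᵐ ω ∂μ, |∑ m ∈ Finset.Icc 1 n, D m ω| ≤ n * K := by
  have h : ∀ᵐ ω ∂μ, ∀ m : ℕ, 1 ≤ m → |D m ω| ≤ K := by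
    rw [ae_all_iff]
    intro m
    by_cases hm : 1 ≤ m
    · filter_upwards [hbdd m hm] with ω h _ using h
    · filter_upwards with ω h using absurd h hm
  filter_upwards [h] with ω hω
  have hω' : ∀ m ∈ Finset.Icc 1 n, |D m ω| ≤ K := fun m hm => hω m (Finset.mem_Icc.1 hm).1
  calc |∑ m ∈ Finset.Icc 1 n, D m ω| ≤ ∑ m ∈ Finset.Icc 1 n, |D m ω| :=
        Finset.abs_sum_le_sum_abs _ _
  _ ≤ (Finset.Icc 1 n).card • K := Finset.sum_le_card_nsmul _ _ _ hω'
  _ = n * K := by simp [Nat.card_Icc]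

lemma integral_exp_sum_le (hK : 0 < K)
    (hmeas : ∀ m : ℕ, 1 ≤ m → StronglyMeasurable[ℱ m] (D m))
    (hbdd : ∀ m : ℕ, 1 ≤ m → ∀ᵐ ω ∂μ, |D m ω| ≤ K)
    (hcond : ∀ m : ℕ, 1 ≤ m → μ[D m | ℱ (m - 1)] =ᵐ[μ] 0)
    (t : ℝ) : ∀ n : ℕ,
      ∫ ω, Real.exp (t * ∑ m ∈ Finset.Icc 1 n, D m ω) ∂μ ≤
        Real.exp (n * (t ^ 2 * K ^ 2 / 2)) := by
  have expint : ∀ n : ℕ, Integrable (fun ω => Real.exp (t * ∑ m ∈ Finset.Icc 1 n, D m ω)) μ := by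
    intro n
    have hsm : AEStronglyMeasurable (fun ω => Real.exp (t * ∑ m ∈ Finset.Icc 1 n, D m ω)) μ :=
      Real.continuous_exp.comp_aestronglyMeasurable
        ((((sum_sm ℱ D hmeas n).mono (ℱ.le n)).aestronglyMeasurable).const_mul t)
    refine (integrable_const (Real.exp (|t| * (n * K)))).mono' hsm ?_
    filter_upwards [sum_bdd μ D hK.le hbdd n] with ω h
    rw [Real.norm_eq_abs, Real.abs_exp]
    refine Real.exp_le_exp.2 ?_
    calc t * _ ≤ |t * _| := le_abs_self _
    _ = |t| * |_| := abs_mul _ _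
    _ ≤ |t| * (n * K) := by gcongr
  intro n
  induction n with
  | zero => simp
  | succ n ih =>
    set f : Ω → ℝ := fun ω => Real.exp (t * ∑ m ∈ Finset.Icc 1 n, D m ω) with hf
    set g : Ω → ℝ := fun ω => Real.exp (t * D (n + 1) ω) with hg
    have hsplit : (fun ω => Real.exp (t * ∑ m ∈ Finset.Icc 1 (n + 1), D m ω)) = f * g := by
      funext ω
      rw [Finset.sum_Icc_succ_top (Nat.one_le_iff_ne_zero.2 (Nat.succ_ne_zero n))]
      simp only [hf, hg, Pi.mul_apply, mul_add, Real.exp_add]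
    have hfg_int : Integrable (f * g) μ := by rw [← hsplit]; exact expint (n + 1)
    have hf_meas : StronglyMeasurable[ℱ n] f :=
      Real.continuous_exp.comp_stronglyMeasurable ((sum_sm ℱ D hmeas n).const_mul t)
    have hg_asm : AEStronglyMeasurable g μ :=
      Real.continuous_exp.comp_aestronglyMeasurable
        ((((hmeas (n + 1) (Nat.le_add_left 1 n)).mono (ℱ.le (n + 1))).aestronglyMeasurable).const_mul t)
    have hg_int : Integrable g μ := by
      refine (integrable_const (Real.exp (|t| * K))).mono' hg_asm ?_
      filter_upwards [hbdd (n + 1) (Nat.le_add_left 1 n)] with ω h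
      rw [Real.norm_eq_abs, Real.abs_exp]
      refine Real.exp_le_exp.2 ?_
      calc t * _ ≤ |t * _| := le_abs_self _
      _ = |t| * |_| := abs_mul _ _
      _ ≤ |t| * K := by gcongr
    have hcondg : μ[g | ℱ n] ≤ᵐ[μ] fun _ => Real.exp (t ^ 2 * K ^ 2 / 2) := by
      refine condexp_exp_le (ℱ.le n)
        (((hmeas (n + 1) (Nat.le_add_left 1 n)).mono (ℱ.le (n + 1))).aestronglyMeasurable)
        hK (hbdd (n + 1) (Nat.le_add_left 1 n)) ?_ t
      simpa using hcond (n + 1) (Nat.le_add_left 1 n)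
    have hpull : μ[f * g | ℱ n] =ᵐ[μ] f * μ[g | ℱ n] :=
      condExp_mul_of_stronglyMeasurable_left hf_meas hfg_int hg_int
    have hint1 : Integrable (f * μ[g | ℱ n]) μ := integrable_condExp.congr hpull
    have hint2 : Integrable (fun ω => f ω * Real.exp (t ^ 2 * K ^ 2 / 2)) μ :=
      (expint n).mul_const (Real.exp (t ^ 2 * K ^ 2 / 2))
    calc ∫ ω, Real.exp (t * ∑ m ∈ Finset.Icc 1 (n + 1), D m ω) ∂μ
        = ∫ ω, (f * g) ω ∂μ := by rw [hsplit]
    _ = ∫ ω, (μ[f * g | ℱ n]) ω ∂μ := (integral_condExp (ℱ.le n)).symm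
    _ = ∫ ω, (f * μ[g | ℱ n]) ω ∂μ := integral_congr_ae hpull
    _ ≤ ∫ ω, f ω * Real.exp (t ^ 2 * K ^ 2 / 2) ∂μ := by
        refine integral_mono_ae hint1 hint2 ?_
        filter_upwards [hcondg] with ω h
        simp only [Pi.mul_apply]
        exact mul_le_mul_of_nonneg_left h (Real.exp_nonneg _)
    _ = (∫ ω, f ω ∂μ) * Real.exp (t ^ 2 * K ^ 2 / 2) := integral_mul_const _ _
    _ ≤ Real.exp (n * (t ^ 2 * K ^ 2 / 2)) * Real.exp (t ^ 2 * K ^ 2 / 2) :=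
        mul_le_mul_of_nonneg_right ih (Real.exp_nonneg _)
    _ = Real.exp ((n + 1 : ℕ) * (t ^ 2 * K ^ 2 / 2)) := by
        rw [← Real.exp_add]; push_cast; ring_nf

/-- Scalar Azuma–Hoeffding tail bound. -/
lemma azuma_tail (hK : 0 < K)
    (hmeas : ∀ m : ℕ, 1 ≤ m → StronglyMeasurable[ℱ m] (D m))
    (hbdd : ∀ m : ℕ, 1 ≤ m → ∀ᵐ ω ∂μ, |D m ω| ≤ K)
    (hcond : ∀ m : ℕ, 1 ≤ m → μ[D m | ℱ (m - 1)] =ᵐ[μ] 0)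
    {η : ℝ} (hη : 0 < η) (n : ℕ) :
    μ {ω | (n : ℝ) * η ≤ ∑ m ∈ Finset.Icc 1 n, D m ω} ≤
      ENNReal.ofReal (Real.exp (-((n : ℝ) * η ^ 2 / (2 * K ^ 2)))) := by
  set t : ℝ := η / K ^ 2 with ht
  have ht0 : 0 ≤ t := div_nonneg hη.le (by positivity)
  set S : Ω → ℝ := fun ω => ∑ m ∈ Finset.Icc 1 n, D m ω with hS
  have hSint : Integrable (fun ω => Real.exp (t * S ω)) μ := by
    have hsm : AEStronglyMeasurable (fun ω => Real.exp (t * S ω)) μ :=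
      Real.continuous_exp.comp_aestronglyMeasurable
        ((((sum_sm ℱ D hmeas n).mono (ℱ.le n)).aestronglyMeasurable).const_mul t)
    refine (integrable_const (Real.exp (|t| * (n * K)))).mono' hsm ?_
    filter_upwards [sum_bdd μ D hK.le hbdd n] with ω h
    rw [Real.norm_eq_abs, Real.abs_exp]
    refine Real.exp_le_exp.2 ?_
    calc t * _ ≤ |t * _| := le_abs_self _
    _ = |t| * |_| := abs_mul _ _
    _ ≤ |t| * (n * K) := by gcongr
  have hmain := ProbabilityTheory.measure_ge_le_exp_mul_mgf (μ := μ) (X := S)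
    ((n : ℝ) * η) ht0 hSint
  have hmgf : ProbabilityTheory.mgf S μ t ≤ Real.exp (n * (t ^ 2 * K ^ 2 / 2)) := by
    rw [ProbabilityTheory.mgf]
    exact integral_exp_sum_le μ ℱ D hK hmeas hbdd hcond t n
  have hfin : μ {ω | (n : ℝ) * η ≤ S ω} ≠ ⊤ := measure_ne_top μ _
  rw [← ENNReal.ofReal_toReal hfin]
  refine ENNReal.ofReal_le_ofReal ?_
  refine hmain.trans ?_
  calc Real.exp (-t * ((n : ℝ) * η)) * ProbabilityTheory.mgf S μ t
      ≤ Real.exp (-t * ((n : ℝ) * η)) * Real.exp (n * (t ^ 2 * K ^ 2 / 2)) := by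
        exact mul_le_mul_of_nonneg_left hmgf (Real.exp_nonneg _)
  _ = Real.exp (-t * ((n : ℝ) * η) + n * (t ^ 2 * K ^ 2 / 2)) := (Real.exp_add _ _).symm
  _ = Real.exp (-((n : ℝ) * η ^ 2 / (2 * K ^ 2))) := by
        congr 1
        rw [ht]
        field_simp
        ring

end Azuma

section Coord
variable {Ω : Type} {m0 : MeasurableSpace Ω} {μ : Measure Ω} [IsProbabilityMeasure μ] {d : ℕ}

lemma coord_abs_le_norm (v : EuclideanSpace ℝ (Fin d)) (i : Fin d) : |v i| ≤ ‖v‖ := by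
  rw [EuclideanSpace.norm_eq]
  have h1 : |v i| = Real.sqrt (‖v i‖ ^ 2) := by
    rw [Real.sqrt_sq_eq_abs, abs_norm, Real.norm_eq_abs]
  rw [h1]
  exact Real.sqrt_le_sqrt (Finset.single_le_sum (fun j _ => sq_nonneg ‖v j‖)
    (Finset.mem_univ i))

lemma sm_coord {m' : MeasurableSpace Ω} {f : Ω → EuclideanSpace ℝ (Fin d)}
    (hf : StronglyMeasurable[m'] f) (i : Fin d) : StronglyMeasurable[m'] (fun ω => f ω i) :=
  (EuclideanSpace.proj (𝕜 := ℝ) i).continuous.comp_stronglyMeasurable hf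

end Coord

/-- The conditional expectation commutes with taking coordinates. -/
lemma proj_condexp {Ω : Type} {m : MeasurableSpace Ω} {m0 : MeasurableSpace Ω} {d : ℕ}
    {μ : Measure Ω} [IsProbabilityMeasure μ] (hm : m ≤ m0) (i : Fin d)
    {f : Ω → EuclideanSpace ℝ (Fin d)} (hf : Integrable f μ) :
    (fun ω => (μ[f | m]) ω i) =ᵐ[μ] μ[fun ω => f ω i | m] := by
  have hce : Integrable (μ[f|m]) μ := integrable_condExp
  have hsm : StronglyMeasurable[m] (fun ω => (μ[f|m]) ω i) :=
    sm_coord stronglyMeasurable_condExp i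
  have hgint : Integrable (fun ω => (μ[f|m]) ω i) μ := by
    refine hce.norm.mono' (hsm.mono hm).aestronglyMeasurable ?_
    filter_upwards with ω
    simpa [Real.norm_eq_abs] using coord_abs_le_norm ((μ[f|m]) ω) i
  have hfint_i : Integrable (fun ω => f ω i) μ := by
    refine hf.norm.mono' ?_ ?_
    · exact (EuclideanSpace.proj (𝕜 := ℝ) i).continuous.comp_aestronglyMeasurable
        hf.aestronglyMeasurable
    · filter_upwards with ω
      simpa [Real.norm_eq_abs] using coord_abs_le_norm (f ω) i
  refine ae_eq_condExp_of_forall_setIntegral_eq hm hfint_i ?_ ?_ ?_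
  · exact fun s _ _ => hgint.integrableOn
  · intro s hs hμs
    have h1 : ∫ ω in s, (μ[f|m]) ω i ∂μ = (∫ ω in s, (μ[f|m]) ω ∂μ) i := by
      have := (EuclideanSpace.proj (𝕜 := ℝ) i).integral_comp_comm (hce.restrict (s := s))
      simpa using this
    have h2 : ∫ ω in s, f ω i ∂μ = (∫ ω in s, f ω ∂μ) i := by
      have := (EuclideanSpace.proj (𝕜 := ℝ) i).integral_comp_comm (hf.restrict (s := s))
      simpa using this
    rw [h1, setIntegral_condExp hm hf hs, ← h2]
  · exact hsm.aestronglyMeasurable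

lemma exists_coord {d : ℕ} {v : EuclideanSpace ℝ (Fin d)} {a : ℝ} (ha : 0 < a)
    (h : a ≤ ‖v‖) : ∃ i, a / Real.sqrt d ≤ |v i| := by
  by_contra hcon
  push_neg at hcon
  rcases Nat.eq_zero_or_pos d with hd | hd
  · subst hd
    rw [EuclideanSpace.norm_eq] at h
    simp at h
    linarith
  · have hd0 : (0 : ℝ) < d := by exact_mod_cast hd
    have hsd : (0 : ℝ) < Real.sqrt d := Real.sqrt_pos.2 hd0
    have hsq : ‖v‖ ^ 2 < a ^ 2 := by
      rw [EuclideanSpace.norm_eq, Real.sq_sqrt (Finset.sum_nonneg fun j _ => sq_nonneg _)]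
      have hne : (Finset.univ : Finset (Fin d)).Nonempty := by
        simpa [Finset.univ_nonempty_iff] using Fin.pos_iff_nonempty.1 hd
      calc ∑ j, ‖v j‖ ^ 2 < ∑ _j : Fin d, (a / Real.sqrt d) ^ 2 := by
            refine Finset.sum_lt_sum_of_nonempty hne fun j _ => ?_
            have h1 := hcon j
            have h2 : (0 : ℝ) ≤ |v j| := abs_nonneg _
            rw [Real.norm_eq_abs]
            nlinarith
      _ = a ^ 2 := by
            rw [Finset.sum_const, Finset.card_univ, Fintype.card_fin, div_pow,
              Real.sq_sqrt hd0.le, nsmul_eq_mul]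
            field_simp
    nlinarith [norm_nonneg v]

lemma final_arith {x a : ℝ} (hx : 1 ≤ x)
    (hc : Real.log 2 < a * (8 * (x + 1) ^ 3)⁻¹) :
    2 * x * Real.exp (-(a / (4 * x))) ≤ 2 * Real.exp (-(a * (8 * (x + 1) ^ 3)⁻¹)) := by
  have hx0 : (0 : ℝ) < x := by linarith
  have hx1 : (0 : ℝ) < x + 1 := by linarith
  have hlog2 : (1 : ℝ) / 2 ≤ Real.log 2 := by
    have := Real.log_two_gt_d9; linarith
  set c : ℝ := (8 * (x + 1) ^ 3)⁻¹ with hcdef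
  have hcpos : 0 < c := by positivity
  have ha : 8 * (x + 1) ^ 3 * Real.log 2 < a := by
    have h8 : (0 : ℝ) < 8 * (x + 1) ^ 3 := by positivity
    rw [hcdef] at hc
    calc 8 * (x + 1) ^ 3 * Real.log 2 < 8 * (x + 1) ^ 3 * (a * (8 * (x + 1) ^ 3)⁻¹) := by
          exact (mul_lt_mul_iff_right₀ h8).2 hc
    _ = a := by field_simp
  have ha0 : 0 < a := by nlinarith
  -- key : log x ≤ a / (4*x) - a * c
  have hkey : Real.log x ≤ a / (4 * x) - a * c := by
    have hlogx : Real.log x ≤ x - 1 := Real.log_le_sub_one_of_pos hx0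
    have hgap : 1 / (8 * (x + 1)) ≤ 1 / (4 * x) - c := by
      rw [hcdef]
      have e1 : (8 * (x + 1) ^ 3)⁻¹ ≤ 1 / (8 * x) := by
        rw [inv_eq_one_div]
        refine one_div_le_one_div_of_le (by positivity) ?_
        have h31 : x + 1 ≤ (x + 1) ^ 3 := le_self_pow₀ (by linarith) (by norm_num)
        nlinarith
      have e2 : 1 / (8 * (x + 1)) ≤ 1 / (8 * x) :=
        one_div_le_one_div_of_le (by positivity) (by nlinarith)
      have e3 : 1 / (8 * x) + 1 / (8 * x) = 1 / (4 * x) := by field_simp; ring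
      linarith
    have h2 : a / (4 * x) - a * c ≥ a * (1 / (8 * (x + 1))) := by
      have := mul_le_mul_of_nonneg_left hgap ha0.le
      calc a * (1 / (8 * (x + 1))) ≤ a * (1 / (4 * x) - c) := this
      _ = a / (4 * x) - a * c := by ring
    have h3 : a * (1 / (8 * (x + 1))) ≥ (x + 1) ^ 2 * Real.log 2 := by
      have : 8 * (x + 1) ^ 3 * Real.log 2 * (1 / (8 * (x + 1))) =
          (x + 1) ^ 2 * Real.log 2 := by field_simp
      rw [← this]
      have hpos : 0 < 1 / (8 * (x + 1)) := by positivity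
      exact le_of_lt ((mul_lt_mul_iff_left₀ hpos).2 ha)
    have h4 : (x + 1) ^ 2 * Real.log 2 ≥ (x + 1) ^ 2 / 2 := by nlinarith [sq_nonneg (x + 1)]
    have h5 : (x + 1) ^ 2 / 2 ≥ x - 1 := by nlinarith [sq_nonneg (x - 1)]
    linarith
  have hxle : x ≤ Real.exp (a / (4 * x) - a * c) := by
    calc x = Real.exp (Real.log x) := (Real.exp_log hx0).symm
    _ ≤ _ := Real.exp_le_exp.2 hkey
  calc 2 * x * Real.exp (-(a / (4 * x)))
      ≤ 2 * Real.exp (a / (4 * x) - a * c) * Real.exp (-(a / (4 * x))) := by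
        have he : (0 : ℝ) < Real.exp (-(a / (4 * x))) := Real.exp_pos _
        nlinarith
  _ = 2 * Real.exp (-(a * c)) := by
        rw [mul_assoc, ← Real.exp_add]; ring_nf

/-- Multidimensional Hoeffding–Azuma inequality (Chen–White): for every dimension `d` there is a
constant `c_d > 0` such that for any adapted sequence `X` of random vectors in `ℝ^d` bounded by
`B` whose conditional expectations are given by the predictable sequence `m`, the average of the
martingale differences `X_m - m_m` deviates from `0` by at least `η` with probability at most
`2 exp(-n η² c_d / (2 B²))`. -/
theorem multidim_hoeffding_azuma (d : ℕ) :
    ∃ c : ℝ, 0 < c ∧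
      ∀ (Ω : Type) (_ : MeasurableSpace Ω) (μ : Measure Ω) (_ : IsProbabilityMeasure μ)
        (ℱ : Filtration ℕ (by infer_instance))
        (X M : ℕ → Ω → EuclideanSpace ℝ (Fin d)) (B : ℝ),
        Adapted ℱ X →
        (∀ n, ∀ᵐ ω ∂μ, ‖X n ω‖ ≤ B) →
        (∀ n, StronglyMeasurable[ℱ n] (M (n + 1))) →
        (∀ n, M (n + 1) =ᵐ[μ] μ[X (n + 1) | ℱ n]) →
        ∀ (η : ℝ), 0 < η → ∀ n : ℕ,
          μ {ω | η ≤ ‖(n : ℝ)⁻¹ • ∑ m ∈ Finset.Icc 1 n, (X m ω - M m ω)‖} ≤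
            ENNReal.ofReal (2 * Real.exp (-((n : ℝ) * η ^ 2 * c / ((2 : ℝ) * B ^ 2)))) := by
  refine ⟨(8 * ((d : ℝ) + 1) ^ 3)⁻¹, by positivity, ?_⟩
  intro Ω mΩ μ hμ ℱ X M B hadap hXbdd hMmeas hMcond η hη n
  haveI : IsProbabilityMeasure μ := hμ
  set c : ℝ := (8 * ((d : ℝ) + 1) ^ 3)⁻¹ with hcdef
  by_cases hcase : (n : ℝ) * η ^ 2 * c / ((2 : ℝ) * B ^ 2) ≤ Real.log 2
  · refine le_trans prob_le_one ?_
    rw [← ENNReal.ofReal_one]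
    refine ENNReal.ofReal_le_ofReal ?_
    have h1 : Real.exp (-Real.log 2) ≤
        Real.exp (-((n : ℝ) * η ^ 2 * c / ((2 : ℝ) * B ^ 2))) :=
      Real.exp_le_exp.2 (by linarith)
    rw [Real.exp_neg, Real.exp_log (by norm_num : (0 : ℝ) < 2)] at h1
    linarith
  · push_neg at hcase
    have hlog2 : (0 : ℝ) ≤ Real.log 2 := Real.log_nonneg (by norm_num)
    have hB2 : B ≠ 0 := by
      intro h
      rw [h] at hcase
      simp at hcase
      linarith
    have hμ0 : μ ≠ 0 := IsProbabilityMeasure.ne_zero μ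
    haveI : (MeasureTheory.ae μ).NeBot := ae_neBot.2 hμ0
    have hB : 0 < B := by
      rcases lt_or_gt_of_ne hB2 with h | h
      · exfalso
        obtain ⟨ω, hω⟩ := (hXbdd 0).exists
        nlinarith [norm_nonneg (X 0 ω)]
      · exact h
    have hn : 0 < n := by
      rcases Nat.eq_zero_or_pos n with h | h
      · exfalso; rw [h] at hcase; simp at hcase; linarith
      · exact h
    set K : ℝ := 2 * B with hKdef
    have hK : 0 < K := by rw [hKdef]; linarith
    set Dc : Fin d → ℕ → Ω → ℝ := fun i m ω => X m ω i - M m ω i with hDc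
    have hXint : ∀ m, Integrable (X m) μ := by
      intro m
      refine (integrable_const B).mono' ((hadap m).stronglyMeasurable.mono (ℱ.le m)).aestronglyMeasurable ?_
      filter_upwards [hXbdd m] with ω h using h
    have hMi : ∀ (i : Fin d) (k : ℕ),
        (fun ω => M (k + 1) ω i) =ᵐ[μ] μ[fun ω => X (k + 1) ω i | ℱ k] := by
      intro i k
      have h1 : (fun ω => M (k + 1) ω i) =ᵐ[μ] fun ω => (μ[X (k + 1) | ℱ k]) ω i := by
        filter_upwards [hMcond k] with ω h using by rw [h]
      exact h1.trans (proj_condexp (ℱ.le k) i (hXint (k + 1)))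
    have hXci : ∀ (i : Fin d) (m : ℕ), ∀ᵐ ω ∂μ, |X m ω i| ≤ B := by
      intro i m
      filter_upwards [hXbdd m] with ω h using (coord_abs_le_norm (X m ω) i).trans h
    have hXiint : ∀ (i : Fin d) (m : ℕ), Integrable (fun ω => X m ω i) μ := by
      intro i m
      refine (integrable_const B).mono'
        ((sm_coord ((hadap m).stronglyMeasurable.mono (ℱ.le m)) i).aestronglyMeasurable) ?_
      filter_upwards [hXci i m] with ω h using by simpa [Real.norm_eq_abs] using h
    have hMiint : ∀ (i : Fin d) (k : ℕ), Integrable (fun ω => M (k + 1) ω i) μ :=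
      fun i k => integrable_condExp.congr (hMi i k).symm
    have hMib : ∀ (i : Fin d) (k : ℕ), ∀ᵐ ω ∂μ, |M (k + 1) ω i| ≤ B := by
      intro i k
      have hb : ∀ᵐ ω ∂μ, |X (k + 1) ω i| ≤ (B.toNNReal : ℝ) := by
        filter_upwards [hXci i (k + 1)] with ω h
        rwa [Real.coe_toNNReal _ hB.le]
      have hbdd := ae_bdd_condExp_of_ae_bdd (m := ℱ k) hb
      filter_upwards [hbdd, hMi i k] with ω h1 h2
      rw [Real.coe_toNNReal _ hB.le] at h1
      show |M (k + 1) ω i| ≤ B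
      rw [h2]
      exact h1
    have hDmeas : ∀ (i : Fin d) (m : ℕ), 1 ≤ m → StronglyMeasurable[ℱ m] (Dc i m) := by
      intro i m hm
      obtain ⟨k, rfl⟩ := Nat.exists_eq_succ_of_ne_zero (Nat.one_le_iff_ne_zero.1 hm)
      exact (sm_coord (hadap (k + 1)).stronglyMeasurable i).sub
        (sm_coord ((hMmeas k).mono (ℱ.mono (Nat.le_succ k))) i)
    have hDbdd : ∀ (i : Fin d) (m : ℕ), 1 ≤ m → ∀ᵐ ω ∂μ, |Dc i m ω| ≤ K := by
      intro i m hm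
      obtain ⟨k, rfl⟩ := Nat.exists_eq_succ_of_ne_zero (Nat.one_le_iff_ne_zero.1 hm)
      filter_upwards [hXci i (k + 1), hMib i k] with ω h1 h2
      obtain ⟨h1a, h1b⟩ := abs_le.1 h1
      obtain ⟨h2a, h2b⟩ := abs_le.1 h2
      rw [hKdef]
      refine abs_le.2 ⟨by simp only [hDc]; linarith, by simp only [hDc]; linarith⟩
    have hDcond : ∀ (i : Fin d) (m : ℕ), 1 ≤ m → μ[Dc i m | ℱ (m - 1)] =ᵐ[μ] 0 := by
      intro i m hm
      obtain ⟨k, rfl⟩ := Nat.exists_eq_succ_of_ne_zero (Nat.one_le_iff_ne_zero.1 hm)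
      show μ[(fun ω => X (k + 1) ω i) - fun ω => M (k + 1) ω i | ℱ k] =ᵐ[μ] 0
      refine (condExp_sub (hXiint i (k + 1)) (hMiint i k) _).trans ?_
      have h2 : μ[fun ω => M (k + 1) ω i | ℱ k] = fun ω => M (k + 1) ω i :=
        condExp_of_stronglyMeasurable (ℱ.le k) (sm_coord (hMmeas k) i) (hMiint i k)
      filter_upwards [(hMi i k).symm] with ω h1
      simp only [Pi.sub_apply, Pi.zero_apply, h2]
      rw [← h1]
      simp
    rcases Nat.eq_zero_or_pos d with hd0 | hd
    · subst hd0
      have hempty : {ω | η ≤ ‖(n : ℝ)⁻¹ • ∑ m ∈ Finset.Icc 1 n, (X m ω - M m ω)‖} = ∅ := by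
        ext ω
        simp only [Set.mem_setOf_eq, Set.mem_empty_iff_false, iff_false, not_le]
        have hv : ((n : ℝ)⁻¹ • ∑ m ∈ Finset.Icc 1 n, (X m ω - M m ω)) = 0 :=
          Subsingleton.elim _ _
        rw [hv, norm_zero]
        exact hη
      rw [hempty]
      simp
    · have hd1 : (1 : ℝ) ≤ d := by exact_mod_cast hd
      have hsd : (0 : ℝ) < Real.sqrt d := Real.sqrt_pos.2 (by positivity)
      set η' : ℝ := η / Real.sqrt d with hη'def
      have hη' : 0 < η' := div_pos hη hsd
      set A : Fin d → Set Ω :=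
        fun i => {ω | (n : ℝ) * η' ≤ ∑ m ∈ Finset.Icc 1 n, Dc i m ω} with hA
      set A' : Fin d → Set Ω :=
        fun i => {ω | (n : ℝ) * η' ≤ ∑ m ∈ Finset.Icc 1 n, -(Dc i m ω)} with hA'
      have hsub : {ω | η ≤ ‖(n : ℝ)⁻¹ • ∑ m ∈ Finset.Icc 1 n, (X m ω - M m ω)‖} ⊆
          ⋃ i, A i ∪ A' i := by
        intro ω hω
        simp only [Set.mem_setOf_eq] at hω
        have hn' : (0 : ℝ) < n := by exact_mod_cast hn
        have h1 : (n : ℝ) * η ≤ ‖∑ m ∈ Finset.Icc 1 n, (X m ω - M m ω)‖ := by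
          rw [norm_smul, Real.norm_eq_abs, abs_inv, abs_of_pos hn'] at hω
          calc (n : ℝ) * η ≤ n * ((n : ℝ)⁻¹ * ‖∑ m ∈ Finset.Icc 1 n, (X m ω - M m ω)‖) := by
                exact mul_le_mul_of_nonneg_left hω hn'.le
          _ = ‖∑ m ∈ Finset.Icc 1 n, (X m ω - M m ω)‖ := by field_simp
        obtain ⟨i, hi⟩ := exists_coord (by positivity) h1
        have hcoord : (∑ m ∈ Finset.Icc 1 n, (X m ω - M m ω)) i =
            ∑ m ∈ Finset.Icc 1 n, Dc i m ω := by
          have hms := map_sum (EuclideanSpace.proj (𝕜 := ℝ) i)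
            (fun m => X m ω - M m ω) (Finset.Icc 1 n)
          simpa [hDc] using hms
        have hdiv : (n : ℝ) * η / Real.sqrt d = n * η' := by rw [hη'def]; ring
        rw [hdiv, hcoord] at hi
        rcases le_abs.1 hi with h | h
        · exact Set.mem_iUnion.2 ⟨i, Or.inl h⟩
        · refine Set.mem_iUnion.2 ⟨i, Or.inr ?_⟩
          simp only [hA', Set.mem_setOf_eq, Finset.sum_neg_distrib]
          exact h
      set r : ℝ := Real.exp (-((n : ℝ) * η' ^ 2 / (2 * K ^ 2))) with hr
      have hAle : ∀ i, μ (A i) ≤ ENNReal.ofReal r := by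
        intro i
        exact azuma_tail μ ℱ (Dc i) hK (hDmeas i) (hDbdd i) (hDcond i) hη' n
      have hA'le : ∀ i, μ (A' i) ≤ ENNReal.ofReal r := by
        intro i
        refine azuma_tail μ ℱ (fun m ω => -(Dc i m ω)) hK ?_ ?_ ?_ hη' n
        · intro m hm
          exact (hDmeas i m hm).neg
        · intro m hm
          filter_upwards [hDbdd i m hm] with ω h using by rwa [abs_neg]
        · intro m hm
          show μ[-(Dc i m) | ℱ (m - 1)] =ᵐ[μ] 0
          refine (condExp_neg _ _).trans ?_
          filter_upwards [hDcond i m hm] with ω h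
          simp only [Pi.neg_apply, Pi.zero_apply] at h ⊢
          rw [h, neg_zero]
      have hmain : μ {ω | η ≤ ‖(n : ℝ)⁻¹ • ∑ m ∈ Finset.Icc 1 n, (X m ω - M m ω)‖} ≤
          (d : ENNReal) * (ENNReal.ofReal r + ENNReal.ofReal r) := by
        calc μ {ω | η ≤ ‖(n : ℝ)⁻¹ • ∑ m ∈ Finset.Icc 1 n, (X m ω - M m ω)‖}
            ≤ μ (⋃ i, A i ∪ A' i) := measure_mono hsub
        _ ≤ ∑ i, μ (A i ∪ A' i) := measure_iUnion_fintype_le μ _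
        _ ≤ ∑ _i : Fin d, (ENNReal.ofReal r + ENNReal.ofReal r) :=
            Finset.sum_le_sum fun i _ =>
              le_trans (measure_union_le _ _) (add_le_add (hAle i) (hA'le i))
        _ = (d : ENNReal) * (ENNReal.ofReal r + ENNReal.ofReal r) := by
            rw [Finset.sum_const, Finset.card_univ, Fintype.card_fin, nsmul_eq_mul]
      refine hmain.trans ?_
      have hrw : (d : ENNReal) * (ENNReal.ofReal r + ENNReal.ofReal r) =
          ENNReal.ofReal ((d : ℝ) * (r + r)) := by
        rw [← ENNReal.ofReal_add (Real.exp_nonneg _) (Real.exp_nonneg _),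
          ← ENNReal.ofReal_natCast d, ← ENNReal.ofReal_mul (by positivity)]
      rw [hrw]
      refine ENNReal.ofReal_le_ofReal ?_
      -- final real inequality
      have hd0' : (d : ℝ) ≠ 0 := by positivity
      have hexp_eq : (n : ℝ) * η' ^ 2 / (2 * K ^ 2) =
          ((n : ℝ) * η ^ 2 / (2 * B ^ 2)) / (4 * (d : ℝ)) := by
        rw [hη'def, hKdef, div_pow, Real.sq_sqrt (by positivity : (0 : ℝ) ≤ (d : ℝ))]
        field_simp
        ring
      have hceq : (n : ℝ) * η ^ 2 * c / ((2 : ℝ) * B ^ 2) =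
          ((n : ℝ) * η ^ 2 / (2 * B ^ 2)) * c := by ring
      have hfin := final_arith (x := (d : ℝ)) (a := (n : ℝ) * η ^ 2 / (2 * B ^ 2)) hd1
        (by rw [← hcdef, ← hceq]; exact hcase)
      rw [← hcdef] at hfin
      calc (d : ℝ) * (r + r) = 2 * (d : ℝ) * r := by ring
      _ = 2 * (d : ℝ) *
          Real.exp (-(((n : ℝ) * η ^ 2 / (2 * B ^ 2)) / (4 * (d : ℝ)))) := by
            rw [hr, hexp_eq]
      _ ≤ 2 * Real.exp (-(((n : ℝ) * η ^ 2 / (2 * B ^ 2)) * c)) := hfin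
      _ = 2 * Real.exp (-((n : ℝ) * η ^ 2 * c / ((2 : ℝ) * B ^ 2))) := by rw [hceq]
end

section
/- Suppose that for every index l in a finite set L, limsup_{n→∞} (|N_n(l)|/n) · ( max_{x ∈ Δ(I)} W(x, μ̄_n(l)) − ρ̄_n(l) − ε ) ≤ 0 almost surely, where {N_n(l)}_{l∈L} partitions {1,…,n}, μ̄_n(l) and ρ̄_n(l) are the averages of bounded sequences (μ_m) in a compact convex set S and (ρ_m) in R over N_n(l), μ̄_n = Σ_l (|N_n(l)|/n) μ̄_n(l), ρ̄_n = Σ_l (|N_n(l)|/n) ρ̄_n(l), and the function μ ↦ max_{x ∈ Δ(I)} W(x,μ) is convex. Then limsup_{n→∞} ( max_{x ∈ Δ(I)} W(x, μ̄_n) − ρ̄_n ) ≤ ε almost surely. -/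
open Filter

private lemma bddU {u : ℕ → ℝ} {C : ℝ} (h : ∀ n, |u n| ≤ C) :
    IsBoundedUnder (· ≤ ·) atTop u :=
  Filter.isBoundedUnder_of ⟨C, fun n => (abs_le.mp (h n)).2⟩

private lemma bddL {u : ℕ → ℝ} {C : ℝ} (h : ∀ n, |u n| ≤ C) :
    IsBoundedUnder (· ≥ ·) atTop u :=
  Filter.isBoundedUnder_of ⟨-C, fun n => (abs_le.mp (h n)).1⟩

private lemma limsup_sum_le {κ : Type*} (t : Finset κ) (g : κ → ℕ → ℝ) :
    (∀ k ∈ t, ∃ C : ℝ, ∀ n, |g k n| ≤ C) →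
    limsup (fun n => ∑ k ∈ t, g k n) atTop ≤ ∑ k ∈ t, limsup (g k) atTop := by
  classical
  induction t using Finset.cons_induction with
  | empty => intro _; simp
  | cons a s ha ih =>
    intro hb'
    obtain ⟨C, hC⟩ := hb' a (Finset.mem_cons_self a s)
    have hbs : ∀ k ∈ s, ∃ C : ℝ, ∀ n, |g k n| ≤ C := fun k hk =>
      hb' k (Finset.mem_cons_of_mem hk)
    obtain ⟨B, hB⟩ : ∃ B : κ → ℝ, ∀ k ∈ s, ∀ n, |g k n| ≤ B k := by
      refine ⟨fun k => if h : k ∈ s then (hbs k h).choose else 0, fun k hk n => ?_⟩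
      simp only [dif_pos hk]
      exact (hbs k hk).choose_spec n
    have hsum : ∀ n, |∑ k ∈ s, g k n| ≤ ∑ k ∈ s, B k := by
      intro n
      calc |∑ k ∈ s, g k n| ≤ ∑ k ∈ s, |g k n| := Finset.abs_sum_le_sum_abs _ _
        _ ≤ ∑ k ∈ s, B k := Finset.sum_le_sum fun k hk => hB k hk n
    have key : limsup (fun n => g a n + ∑ k ∈ s, g k n) atTop
        ≤ limsup (g a) atTop + limsup (fun n => ∑ k ∈ s, g k n) atTop := by
      have := limsup_add_le (f := atTop) (u := g a) (v := fun n => ∑ k ∈ s, g k n)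
        (bddL hC) (bddU hC) ((bddL hsum).isCoboundedUnder_le) (bddU hsum)
      simpa [Pi.add_def] using this
    simp only [Finset.sum_cons]
    exact key.trans (add_le_add_right (ih hbs) _)

/-- Pathwise core of "internal consistency implies external consistency": if for every type
`l ∈ L` the weighted per-type regret `(|N_n(l)|/n) (max_x W(x, μ̄_n(l)) - ρ̄_n(l) - ε)` has
nonpositive limsup, the per-type average flags lie in a compact convex set `S` on which the
convex value function `V = max_x W` is bounded, and the per-type average payoffs are bounded,
then the global regret `V(μ̄_n) - ρ̄_n` has limsup at most `ε`, where `μ̄_n` and `ρ̄_n` are the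
corresponding convex combinations. -/
theorem internal_implies_external_pathwise {L : Type*} [Fintype L] {m : ℕ}
    (S : Set (EuclideanSpace ℝ (Fin m))) (hScpt : IsCompact S) (hSconv : Convex ℝ S)
    (V : EuclideanSpace ℝ (Fin m) → ℝ) (hV : ConvexOn ℝ S V)
    (MV : ℝ) (hVbdd : ∀ μ ∈ S, |V μ| ≤ MV)
    (N : ℕ → L → ℕ) (hN : ∀ n : ℕ, 0 < n → ∑ l, N n l = n)
    (μbar : ℕ → L → EuclideanSpace ℝ (Fin m)) (hμS : ∀ n l, μbar n l ∈ S)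
    (ρbar : ℕ → L → ℝ) (M : ℝ) (hρ : ∀ n l, |ρbar n l| ≤ M)
    (ε : ℝ)
    (hint : ∀ l : L,
      limsup (fun n : ℕ => ((N n l : ℝ) / n) * (V (μbar n l) - ρbar n l - ε)) atTop ≤ 0) :
    limsup (fun n : ℕ =>
        V (∑ l, ((N n l : ℝ) / n) • μbar n l) - ∑ l, ((N n l : ℝ) / n) * ρbar n l) atTop
      ≤ ε := by
  classical
  set w : ℕ → L → ℝ := fun n l => (N n l : ℝ) / n with hw
  set g : L → ℕ → ℝ := fun l n => w n l * (V (μbar n l) - ρbar n l - ε) with hg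
  set F : ℕ → ℝ := fun n =>
    V (∑ l, w n l • μbar n l) - ∑ l, w n l * ρbar n l with hF
  -- basic facts about weights for n ≥ 1
  have hw0 : ∀ n l, 0 ≤ w n l := fun n l => div_nonneg (Nat.cast_nonneg _) (Nat.cast_nonneg _)
  have hwsum : ∀ n : ℕ, 0 < n → ∑ l, w n l = 1 := by
    intro n hn
    have : (∑ l, (N n l : ℝ)) = (n : ℝ) := by
      rw [← Nat.cast_sum, hN n hn]
    simp only [hw, ← Finset.sum_div, this]
    field_simp
  have hw1 : ∀ n : ℕ, ∀ l, w n l ≤ 1 := by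
    intro n l
    rcases Nat.eq_zero_or_pos n with h | h
    · simp [hw, h]
    · calc w n l ≤ ∑ l', w n l' :=
            Finset.single_le_sum (fun l' _ => hw0 n l') (Finset.mem_univ l)
        _ = 1 := hwsum n h
  -- bound on each g l
  have hgbd : ∀ l n, |g l n| ≤ MV + M + |ε| := by
    intro l n
    have h1 : |V (μbar n l) - ρbar n l - ε| ≤ MV + M + |ε| := by
      calc |V (μbar n l) - ρbar n l - ε|
          ≤ |V (μbar n l)| + |ρbar n l| + |ε| := by
            apply (abs_sub _ _).trans
            exact add_le_add_left (abs_sub _ _) _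
        _ ≤ MV + M + |ε| := by
            gcongr
            exacts [hVbdd _ (hμS n l), hρ n l]
    have h2 : |w n l| ≤ 1 := by rw [abs_of_nonneg (hw0 n l)]; exact hw1 n l
    calc |g l n| = |w n l| * |V (μbar n l) - ρbar n l - ε| := abs_mul _ _
      _ ≤ 1 * (MV + M + |ε|) := by
          apply mul_le_mul h2 h1 (abs_nonneg _)
          exact zero_le_one
      _ = MV + M + |ε| := one_mul _
  -- eventual pointwise inequality: F n ≤ (∑ l, g l n) + ε for n ≥ 1
  have hptwise : ∀ n : ℕ, 0 < n → F n ≤ (∑ l, g l n) + ε := by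
    intro n hn
    have hjensen : V (∑ l, w n l • μbar n l) ≤ ∑ l, w n l * V (μbar n l) :=
      hV.map_sum_le (fun l _ => hw0 n l) (hwsum n hn) (fun l _ => hμS n l)
    have : (∑ l, g l n) + ε
        = ∑ l, w n l * V (μbar n l) - ∑ l, w n l * ρbar n l := by
      simp only [hg, mul_sub]
      rw [Finset.sum_sub_distrib, Finset.sum_sub_distrib, ← Finset.sum_mul, hwsum n hn]
      ring
    rw [this, hF]
    exact sub_le_sub_right hjensen _
  -- bound on the sum of g
  have hGbd : ∀ n, |∑ l, g l n| ≤ ∑ _l : L, (MV + M + |ε|) := fun n =>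
    (Finset.abs_sum_le_sum_abs _ _).trans
      (Finset.sum_le_sum fun l _ => hgbd l n)
  -- F ≤ G eventually where G n = ∑ g + ε
  have hFle : ∀ᶠ n in atTop, F n ≤ (∑ l, g l n) + ε := by
    filter_upwards [eventually_gt_atTop 0] with n hn using hptwise n hn
  -- boundedness facts for G
  have hGbdU : IsBoundedUnder (· ≤ ·) atTop (fun n => (∑ l, g l n) + ε) :=
    Filter.isBoundedUnder_of
      ⟨(∑ _l : L, (MV + M + |ε|)) + ε,
        fun n => add_le_add_left ((abs_le.mp (hGbd n)).2) ε⟩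
  -- coboundedness of F : eventually F n ≥ -(MV + M)
  have hFcb : IsCoboundedUnder (· ≤ ·) atTop F := by
    apply IsBoundedUnder.isCoboundedUnder_le
    refine ⟨-(MV + ∑ _l : L, M), eventually_map.2 ?_⟩
    filter_upwards [eventually_gt_atTop 0] with n hn
    have hμ : (∑ l, w n l • μbar n l) ∈ S :=
      hSconv.sum_mem (fun l _ => hw0 n l) (hwsum n hn) (fun l _ => hμS n l)
    have h1 : -MV ≤ V (∑ l, w n l • μbar n l) := (abs_le.mp (hVbdd _ hμ)).1
    have h2 : (∑ l, w n l * ρbar n l) ≤ ∑ _l : L, M := by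
      apply Finset.sum_le_sum
      intro l _
      calc w n l * ρbar n l ≤ w n l * M :=
            mul_le_mul_of_nonneg_left ((abs_le.mp (hρ n l)).2) (hw0 n l)
        _ ≤ 1 * M := by
            apply mul_le_mul_of_nonneg_right (hw1 n l)
            exact le_trans (abs_nonneg _) (hρ n l)
        _ = M := one_mul M
    simp only [hF, neg_add]
    linarith
  have step1 : limsup F atTop ≤ limsup (fun n => (∑ l, g l n) + ε) atTop :=
    limsup_le_limsup hFle hFcb hGbdU
  have step2 : limsup (fun n => (∑ l, g l n) + ε) atTop
      = limsup (fun n => ∑ l, g l n) atTop + ε :=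
    limsup_add_const atTop (fun n => ∑ l, g l n) ε (bddU hGbd)
      ((bddL hGbd).isCoboundedUnder_le)
  have step3 : limsup (fun n => ∑ l, g l n) atTop ≤ ∑ l, limsup (g l) atTop :=
    limsup_sum_le Finset.univ g (fun l _ => ⟨MV + M + |ε|, hgbd l⟩)
  have step4 : (∑ l, limsup (g l) atTop) ≤ 0 :=
    Finset.sum_nonpos fun l _ => hint l
  calc limsup F atTop ≤ limsup (fun n => ∑ l, g l n) atTop + ε := by rw [← step2]; exact step1
    _ ≤ (∑ l, limsup (g l) atTop) + ε := add_le_add_left step3 ε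
    _ ≤ 0 + ε := add_le_add_left step4 ε
    _ = ε := zero_add ε
end
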